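/- Let N ≥ 2, let A be a Hermitian N×N complex matrix with τ = tr A, let v ∈ ℂ^N be a unit vector with α = ⟨v, A v⟩, and assume α > 0, τ > 0 and Nα > τ. If the Choi matrix Z_A = (1/α)·A ⊗ P + (1/(N/τ − 1/α))·(𝟙 − A/α) ⊗ (𝟙/τ − P/α) is positive semidefinite, then α·𝟙 − A is positive semidefinite. -/

import Mathlib

open Matrix Kronecker ComplexOrder

private lemma kron_quad {N : ℕ} (B C : Matrix (Fin N) (Fin N) ℂ) (x u : Fin N → ℂ) :
    star (fun p : Fin N × Fin N => x p.1 * u p.2) ⬝ᵥ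
      ((B ⊗ₖ C) *ᵥ (fun p : Fin N × Fin N => x p.1 * u p.2)) =
    (star x ⬝ᵥ B *ᵥ x) * (star u ⬝ᵥ C *ᵥ u) := by
  have hmv : ∀ p : Fin N × Fin N,
      ((B ⊗ₖ C) *ᵥ (fun p : Fin N × Fin N => x p.1 * u p.2)) p
        = (B *ᵥ x) p.1 * (C *ᵥ u) p.2 := by
    intro p
    simp only [Matrix.mulVec, dotProduct, kroneckerMap_apply, Fintype.sum_prod_type]
    rw [Finset.sum_mul_sum]
    exact Finset.sum_congr rfl fun k _ => Finset.sum_congr rfl fun l _ => by ring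
  simp only [dotProduct, hmv, Pi.star_apply, star_mul', Fintype.sum_prod_type]
  rw [Finset.sum_mul_sum]
  exact Finset.sum_congr rfl fun k _ => Finset.sum_congr rfl fun l _ => by ring

/-- If the Choi matrix `Z_A` is positive semidefinite then
`α·𝟙 − A` is positive semidefinite. -/
theorem choi_posSemidef_upper_bound (N : ℕ) (hN : 2 ≤ N)
    (A : Matrix (Fin N) (Fin N) ℂ) (hA : A.IsHermitian)
    (v : Fin N → ℂ) (hv : star v ⬝ᵥ v = 1)
    (τ α : ℝ) (hτ : A.trace = (τ : ℂ)) (hα : star v ⬝ᵥ A.mulVec v = (α : ℂ))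
    (hα0 : 0 < α) (hτ0 : 0 < τ) (hNα : τ < (N : ℝ) * α)
    (P : Matrix (Fin N) (Fin N) ℂ) (hP : P = vecMulVec (star v) v)
    (Z : Matrix (Fin N × Fin N) (Fin N × Fin N) ℂ)
    (hZ : Z = ((α : ℂ))⁻¹ • (A ⊗ₖ P) +
      ((((N : ℝ) / τ - 1 / α : ℝ) : ℂ))⁻¹ •
        ((1 - ((α : ℂ))⁻¹ • A) ⊗ₖ (((τ : ℂ))⁻¹ • 1 - ((α : ℂ))⁻¹ • P)))
    (hZpsd : Z.PosSemidef) :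
    (((α : ℝ) : ℂ) • 1 - A).PosSemidef := by
  have hαC : ((α : ℝ) : ℂ) ≠ 0 := by exact_mod_cast hα0.ne'
  have hdpos : (0 : ℝ) < (N : ℝ) / τ - 1 / α := by
    rw [sub_pos, div_lt_div_iff₀ hα0 hτ0]
    linarith
  -- find i with v i ≠ 0
  have hvne : v ≠ 0 := by
    intro h; rw [h] at hv; simp at hv
  obtain ⟨i, hi⟩ := Function.ne_iff.mp hvne
  simp only [Pi.zero_apply] at hi
  -- find j ≠ i
  obtain ⟨j, hj⟩ : ∃ j : Fin N, j ≠ i := by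
    have : 1 < Fintype.card (Fin N) := by simp; omega
    exact Fintype.exists_ne_of_one_lt_card this i
  set u : Fin N → ℂ := v i • (Pi.single j 1 : Fin N → ℂ) - v j • (Pi.single i 1 : Fin N → ℂ) with hu
  have hvu : v ⬝ᵥ u = 0 := by
    simp [hu, dotProduct_sub, dotProduct_smul, smul_eq_mul]
    ring
  have hune : u ≠ 0 := by
    intro h
    have hj' := congrFun h j
    simp [hu, Pi.single_eq_same, Pi.single_eq_of_ne hj] at hj'
    exact hi hj'
  have hs : (0 : ℂ) < star u ⬝ᵥ u := dotProduct_star_self_pos_iff.mpr hune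
  set s : ℂ := star u ⬝ᵥ u with hsdef
  have hsre : 0 < s.re ∧ s.im = 0 := by
    rw [Complex.lt_def] at hs
    exact ⟨by simpa using hs.1, by simpa using hs.2.symm⟩
  set r : ℝ := s.re with hrdef
  have hsr : s = (r : ℝ) := by
    apply Complex.ext <;> simp [hrdef, hsre.2]
  have hPu : P *ᵥ u = 0 := by
    ext k
    simp only [hP, Matrix.mulVec, dotProduct, vecMulVec_apply, Pi.zero_apply, mul_assoc,
      ← Finset.mul_sum]
    have : ∑ l, v l * u l = 0 := hvu
    rw [this, mul_zero]
  -- the key computation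

  refine posSemidef_iff_dotProduct_mulVec.mpr ⟨?_, ?_⟩
  · simp [Matrix.IsHermitian, conjTranspose_sub, conjTranspose_smul, Complex.star_def,
      Complex.conj_ofReal, hA.eq]
  intro x
  set w : Fin N × Fin N → ℂ := fun p => x p.1 * u p.2 with hw
  set t : ℂ := star x ⬝ᵥ x - ((α : ℂ))⁻¹ * (star x ⬝ᵥ A *ᵥ x) with htdef
  have key : star w ⬝ᵥ Z *ᵥ w
      = ((((N : ℝ) / τ - 1 / α : ℝ) : ℂ))⁻¹ * (t * (((τ : ℂ))⁻¹ * s)) := by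
    rw [hZ, add_mulVec, smul_mulVec, smul_mulVec, dotProduct_add,
      dotProduct_smul, dotProduct_smul, hw, kron_quad, kron_quad]
    have h1 : star u ⬝ᵥ P *ᵥ u = 0 := by rw [hPu, dotProduct_zero]
    have h2 : star x ⬝ᵥ (1 - ((α : ℂ))⁻¹ • A) *ᵥ x = t := by
      rw [sub_mulVec, smul_mulVec, one_mulVec, dotProduct_sub, dotProduct_smul,
        smul_eq_mul, htdef]
    have h3 : star u ⬝ᵥ (((τ : ℂ))⁻¹ • 1 - ((α : ℂ))⁻¹ • P) *ᵥ u = ((τ : ℂ))⁻¹ * s := by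
      rw [sub_mulVec, smul_mulVec, smul_mulVec, one_mulVec, dotProduct_sub,
        dotProduct_smul, dotProduct_smul, h1, smul_zero, sub_zero, smul_eq_mul, hsdef]
    rw [h1, h2, h3, mul_zero, smul_zero, zero_add, smul_eq_mul]
  have hZw := hZpsd.dotProduct_mulVec_nonneg w
  rw [key] at hZw
  -- turn the coefficient into a positive real
  set c : ℝ := ((N : ℝ) / τ - 1 / α)⁻¹ * τ⁻¹ * r with hcdef
  have hc : 0 < c := by
    apply mul_pos (mul_pos (inv_pos.mpr hdpos) (inv_pos.mpr hτ0)) hsre.1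
  have hct : ((((N : ℝ) / τ - 1 / α : ℝ) : ℂ))⁻¹ * (t * (((τ : ℂ))⁻¹ * s)) = (c : ℂ) * t := by
    rw [hsr, hcdef]
    push_cast
    ring
  rw [hct] at hZw
  have ht : (0 : ℂ) ≤ t := by
    have h2 := mul_nonneg (show (0 : ℂ) ≤ ((c⁻¹ : ℝ) : ℂ) by
      exact_mod_cast (inv_pos.mpr hc).le) hZw
    rwa [← mul_assoc, ← Complex.ofReal_mul, inv_mul_cancel₀ hc.ne', Complex.ofReal_one,
      one_mul] at h2
  have hfinal : star x ⬝ᵥ (((α : ℝ) : ℂ) • 1 - A) *ᵥ x = ((α : ℝ) : ℂ) * t := by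
    rw [sub_mulVec, smul_mulVec, one_mulVec, dotProduct_sub, dotProduct_smul,
      smul_eq_mul, htdef, mul_sub, ← mul_assoc, mul_inv_cancel₀ hαC, one_mul]
  rw [hfinal]
  exact mul_nonneg (by exact_mod_cast hα0.le) ht
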